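/- Let X be a complete metric space and f : X → ℝ∪{+∞} lower semicontinuous, proper, and bounded below. Then for any x ∈ dom f and constants α, β > 0 with α·β < 1/2, there exists x₊ ∈ X satisfying f(x) - f(x₊) ≥ α·d(x,x₊)² and d(x,x₊) ≥ β·|∇f|(x₊). -/

import Mathlib

open Filter Topology

/-- The (metric) slope of `f` at `x`. -/
noncomputable def mSlope {X : Type*} [MetricSpace X] (f : X → EReal) (x : X) : EReal :=
  if f x = ⊤ then ⊤ else
    sInf {e : EReal | ∃ ε : ℝ, 0 < ε ∧ e = (ε : EReal) ∧
      ∀ᶠ y in nhds x, f x ≤ f y + ((ε * dist x y : ℝ) : EReal)}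

lemma ereal_le_coe_of_forall_add {a : EReal} {c : ℝ}
    (h : ∀ r : ℝ, 0 < r → a ≤ ((c + r : ℝ) : EReal)) : a ≤ (c : EReal) := by
  by_contra hc
  push_neg at hc
  obtain ⟨t, ht1, ht2⟩ := EReal.lt_iff_exists_real_btwn.1 hc
  have h1 : c < t := EReal.coe_lt_coe_iff.1 ht1
  exact lt_irrefl _ ((h (t - c) (by linarith)).trans_lt (by rw [add_sub_cancel]; exact ht2))

lemma mSlope_nonneg {X : Type*} [MetricSpace X] (f : X → EReal) (w : X) : 0 ≤ mSlope f w := by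
  rw [mSlope]
  split
  · exact le_top
  · exact le_sInf (by rintro e ⟨ε, hε, rfl, -⟩; exact_mod_cast hε.le)

lemma mSlope_le {X : Type*} [MetricSpace X] (f : X → EReal) (w : X) (c : ℝ)
    (hw : f w ≠ ⊤)
    (hev : ∀ r : ℝ, 0 < r → ∀ᶠ y in nhds w, f w ≤ f y + (((c + r) * dist w y : ℝ) : EReal))
    (hc : 0 ≤ c) : mSlope f w ≤ (c : EReal) := by
  rw [mSlope, if_neg hw]
  refine ereal_le_coe_of_forall_add fun r hr => ?_
  exact sInf_le ⟨c + r, by positivity, rfl, hev r hr⟩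

theorem ekeland_aux {X : Type*} [MetricSpace X] [CompleteSpace X]
    (h : X → EReal) (hlsc : LowerSemicontinuous h)
    (b : ℝ) (hb : ∀ y, (b : EReal) ≤ h y)
    (x : X) (hx : h x ≠ ⊤) (σ : ℝ) (hσ : 0 < σ) :
    ∃ z : X, h z + ((σ * dist x z : ℝ) : EReal) ≤ h x ∧
      ∀ y, h z ≤ h y + ((σ * dist z y : ℝ) : EReal) := by
  classical
  set F : X → Set X := fun y => {w | h w + ((σ * dist y w : ℝ) : EReal) ≤ h y} with hF
  have hne_bot : ∀ y, h y ≠ ⊥ := fun y hy => by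
    have := hb y; rw [hy] at this; exact (EReal.coe_ne_bot b) (le_bot_iff.1 this)
  have mem_self : ∀ y, y ∈ F y := by
    intro y; simp [hF]
  have mem_le : ∀ {y w : X}, w ∈ F y → h w ≤ h y := by
    intro y w hw
    refine le_trans ?_ hw
    exact le_add_of_nonneg_right (by exact_mod_cast mul_nonneg hσ.le dist_nonneg)
  have htrans : ∀ {y z w : X}, z ∈ F y → w ∈ F z → w ∈ F y := by
    intro y z w hz hw
    have t : dist y w ≤ dist y z + dist z w := dist_triangle y z w
    calc h w + ((σ * dist y w : ℝ) : EReal)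
        ≤ h w + ((σ * dist z w + σ * dist y z : ℝ) : EReal) := by
          apply add_le_add_right
          exact_mod_cast (by nlinarith : σ * dist y w ≤ σ * dist z w + σ * dist y z)
      _ = (h w + ((σ * dist z w : ℝ) : EReal)) + ((σ * dist y z : ℝ) : EReal) := by
          rw [EReal.coe_add, add_assoc]
      _ ≤ h z + ((σ * dist y z : ℝ) : EReal) := add_le_add_left hw _
      _ ≤ h y := hz
  -- the choice step
  have key : ∀ p : {y : X // h y ≠ ⊤}, ∀ n : ℕ, ∃ q : {y : X // h y ≠ ⊤},
      (q : X) ∈ F p ∧ h q ≤ sInf (h '' F p) + ((((n : ℝ) + 1)⁻¹ : ℝ) : EReal) := by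
    rintro ⟨y, hy⟩ n
    have hmem : h y ∈ h '' F y := ⟨y, mem_self y, rfl⟩
    have hinf_le : sInf (h '' F y) ≤ h y := sInf_le hmem
    have h1 : sInf (h '' F y) ≠ ⊤ := fun h' => hy (top_le_iff.1 (h' ▸ hinf_le))
    have h2 : sInf (h '' F y) ≠ ⊥ := by
      refine (lt_of_lt_of_le (bot_lt_iff_ne_bot.2 (EReal.coe_ne_bot b)) ?_).ne'
      exact le_sInf (by rintro e ⟨w, -, rfl⟩; exact hb w)
    obtain ⟨mr, hmr⟩ : ∃ mr : ℝ, sInf (h '' F y) = (mr : EReal) :=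
      ⟨(sInf (h '' F y)).toReal, (EReal.coe_toReal h1 h2).symm⟩
    have hlt : sInf (h '' F y) < sInf (h '' F y) + ((((n : ℝ) + 1)⁻¹ : ℝ) : EReal) := by
      rw [hmr, ← EReal.coe_add]
      exact EReal.coe_lt_coe_iff.2 (lt_add_of_pos_right mr (by positivity))
    obtain ⟨e, ⟨q, hqF, rfl⟩, hqe⟩ := sInf_lt_iff.1 hlt
    have hfin : sInf (h '' F y) + ((((n : ℝ) + 1)⁻¹ : ℝ) : EReal) < ⊤ := by
      rw [hmr, ← EReal.coe_add]; exact EReal.coe_lt_top _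
    exact ⟨⟨q, (hqe.trans hfin).ne⟩, hqF, hqe.le⟩
  choose g hg1 hg2 using key
  set u : ℕ → {y : X // h y ≠ ⊤} := fun n => Nat.rec ⟨x, hx⟩ (fun n p => g p n) n with hu
  have hus : ∀ n, u (n + 1) = g (u n) n := fun n => rfl
  have chain : ∀ n m, n ≤ m → ((u m : X) ∈ F (u n)) := by
    intro n m hnm
    induction m, hnm using Nat.le_induction with
    | base => exact mem_self _
    | succ m hm ih =>
        refine htrans ih ?_
        rw [hus]; exact hg1 (u m) m
  set r : ℕ → ℝ := fun n => (h (u n)).toReal with hr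
  have hcoe : ∀ n, h ((u n : X)) = ((r n : ℝ) : EReal) := fun n =>
    (EReal.coe_toReal (u n).2 (hne_bot _)).symm
  have hreal : ∀ n m, n ≤ m → r m + σ * dist (u n : X) (u m : X) ≤ r n := by
    intro n m hnm
    have := chain n m hnm
    rw [Set.mem_setOf_eq, hcoe n, hcoe m, ← EReal.coe_add] at this
    exact_mod_cast this
  have hanti : Antitone r := antitone_nat_of_succ_le fun n => by
    have := hreal n (n + 1) (Nat.le_succ n)
    nlinarith [dist_nonneg (x := (u n : X)) (y := (u (n+1) : X))]
  have hrbdd : ∀ n, b ≤ r n := by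
    intro n
    have := hb (u n : X)
    rw [hcoe n] at this
    exact_mod_cast this
  have hrconv : ∃ L, Tendsto r atTop (nhds L) :=
    ⟨_, tendsto_atTop_ciInf hanti ⟨b, by rintro e ⟨n, rfl⟩; exact hrbdd n⟩⟩
  obtain ⟨L, hL⟩ := hrconv
  have hrC : CauchySeq r := hL.cauchySeq
  have huC : CauchySeq (fun n => (u n : X)) := by
    rw [Metric.cauchySeq_iff]
    intro ε hε
    obtain ⟨N, hN⟩ := Metric.cauchySeq_iff.1 hrC (σ * ε) (by positivity)
    refine ⟨N, fun m hm n hn => ?_⟩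
    have key2 : ∀ a c : ℕ, N ≤ a → N ≤ c → a ≤ c → dist (u a : X) (u c : X) < ε := by
      intro a c ha hc hac
      have h1 := hreal a c hac
      have h2 := hN a ha c hc
      rw [Real.dist_eq] at h2
      have : σ * dist (u a : X) (u c : X) ≤ r a - r c := by linarith
      have habs : r a - r c < σ * ε := (le_abs_self _).trans_lt (abs_sub_comm (r a) (r c) ▸ h2)
      nlinarith [dist_nonneg (x := (u a : X)) (y := (u c : X))]
    rcases le_total m n with hmn | hmn
    · exact key2 m n hm hn hmn
    · rw [dist_comm]; exact key2 n m hn hm hmn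
  obtain ⟨z, hz⟩ := cauchySeq_tendsto_of_complete huC
  -- Claim A : z ∈ F (u n) for all n
  have claimA : ∀ n, z ∈ F (u n : X) := by
    intro n
    have hkey : h z ≤ ((r n - σ * dist (u n : X) z : ℝ) : EReal) := by
      by_contra hcon
      push_neg at hcon
      obtain ⟨t, ht1, ht2⟩ := EReal.lt_iff_exists_real_btwn.1 hcon
      have hc1 : r n - σ * dist (u n : X) z < t := EReal.coe_lt_coe_iff.1 ht1
      have ev1 : ∀ᶠ m in atTop, ((t : ℝ) : EReal) < h ((u m : X)) :=
        hz.eventually (hlsc z _ ht2)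
      have ev2 : ∀ᶠ m in atTop, t < r n - σ * dist (u n : X) (u m : X) := by
        filter_upwards [ev1, eventually_ge_atTop n] with m h1 h2
        have h3 := hreal n m h2
        rw [hcoe m] at h1
        have h4 : t < r m := EReal.coe_lt_coe_iff.1 h1
        linarith
      have htend : Tendsto (fun m => r n - σ * dist (u n : X) (u m : X)) atTop
          (nhds (r n - σ * dist (u n : X) z)) :=
        tendsto_const_nhds.sub ((tendsto_const_nhds.dist hz).const_mul σ)
      have := ge_of_tendsto htend (ev2.mono fun m hm => hm.le)
      linarith
    rw [Set.mem_setOf_eq, hcoe n]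
    calc h z + ((σ * dist (u n : X) z : ℝ) : EReal)
        ≤ ((r n - σ * dist (u n : X) z : ℝ) : EReal) + ((σ * dist (u n : X) z : ℝ) : EReal) :=
          add_le_add_left hkey _
      _ = ((r n : ℝ) : EReal) := by rw [← EReal.coe_add]; norm_num
  have hz_le : h z + ((σ * dist x z : ℝ) : EReal) ≤ h x := claimA 0
  refine ⟨z, hz_le, ?_⟩
  have hz_le_hx : h z ≤ h x :=
    le_trans (le_add_of_nonneg_right
      (by exact_mod_cast mul_nonneg hσ.le dist_nonneg : (0:EReal) ≤ ((σ * dist x z : ℝ) : EReal)))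
      hz_le
  have hztop : h z ≠ ⊤ := fun htop => hx (top_le_iff.1 (htop ▸ hz_le_hx))
  set rz : ℝ := (h z).toReal with hrz
  have hzcoe : h z = (rz : EReal) := (EReal.coe_toReal hztop (hne_bot z)).symm
  intro y
  by_contra hcon
  push_neg at hcon
  have hytop : h y ≠ ⊤ := by
    intro htop
    rw [htop, EReal.top_add_coe] at hcon
    exact not_top_lt hcon
  set ry : ℝ := (h y).toReal with hry
  have hycoe : h y = (ry : EReal) := (EReal.coe_toReal hytop (hne_bot y)).symm
  have hyFz : y ∈ F z := hcon.le
  have hyFn : ∀ n, y ∈ F (u n : X) := fun n => htrans (claimA n) hyFz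
  have hle : ∀ n : ℕ, rz ≤ ry + ((n : ℝ) + 1)⁻¹ := by
    intro n
    have h1 : h z ≤ h ((u (n + 1) : X)) := mem_le (claimA (n + 1))
    have h2 : h ((u (n + 1) : X)) ≤ sInf (h '' F (u n : X)) + ((((n : ℝ) + 1)⁻¹ : ℝ) : EReal) := by
      rw [hus]; exact hg2 (u n) n
    have h3 : sInf (h '' F (u n : X)) ≤ h y := sInf_le ⟨y, hyFn n, rfl⟩
    have h4 := h1.trans (h2.trans (add_le_add_left h3 _))
    rw [hzcoe, hycoe, ← EReal.coe_add] at h4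
    exact_mod_cast h4
  have hzy : rz ≤ ry := by
    refine le_of_forall_pos_le_add fun ε hε => ?_
    obtain ⟨n, hn⟩ := exists_nat_one_div_lt hε
    have := hle n
    rw [one_div] at hn
    linarith
  have hcon' : ry + σ * dist z y < rz := by
    rw [hzcoe, hycoe, ← EReal.coe_add] at hcon
    exact_mod_cast hcon
  nlinarith [dist_nonneg (x := z) (y := y)]

/-- Existence of slope-descent steps: on a complete metric space, for any lsc proper
bounded-below `f : X → ℝ∪{+∞}`, point `x ∈ dom f`, and `α, β > 0` with `α·β < 1/2`,
there exists `xp` with `f x - f xp ≥ α·d(x,xp)²` and `d(x,xp) ≥ β·|∇f|(xp)`. -/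
theorem exists_slope_descent {X : Type*} [MetricSpace X] [CompleteSpace X]
    (f : X → EReal) (hlsc : LowerSemicontinuous f)
    (hnb : ∀ x, f x ≠ ⊥) (hbdd : ∃ b : ℝ, ∀ x, (b : EReal) ≤ f x)
    (x : X) (hx : f x ≠ ⊤)
    (α β : ℝ) (hα : 0 < α) (hβ : 0 < β) (hαβ : α * β < 1/2) :
    ∃ xp : X,
      f xp + ((α * (dist x xp) ^ 2 : ℝ) : EReal) ≤ f x ∧
      (β : EReal) * mSlope f xp ≤ ((dist x xp : ℝ) : EReal) := by
  classical
  obtain ⟨b, hb⟩ := hbdd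
  set h : X → EReal := fun y => f y + ((α * dist x y ^ 2 : ℝ) : EReal) with hh
  have hx0 : h x = f x := by simp [hh]
  have hnonneg : ∀ y, (0 : EReal) ≤ ((α * dist x y ^ 2 : ℝ) : EReal) := by
    intro y; exact_mod_cast by positivity
  have hfleh : ∀ y, f y ≤ h y := fun y => le_add_of_nonneg_right (hnonneg y)
  have hlsch : LowerSemicontinuous h := by
    refine hlsc.add' ((continuous_coe_real_ereal.comp (by fun_prop)).lowerSemicontinuous) ?_
    intro y
    rcases eq_or_ne (f y) ⊤ with hfy | hfy
    · rw [hfy]; exact EReal.continuousAt_add_top_coe _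
    · obtain ⟨t, ht⟩ : ∃ t : ℝ, f y = (t : EReal) :=
        ⟨(f y).toReal, (EReal.coe_toReal hfy (hnb y)).symm⟩
      rw [ht]; exact EReal.continuousAt_add_coe_coe _ _
  have hbh : ∀ y, (b : EReal) ≤ h y := fun y => (hb y).trans (hfleh y)
  have hek : ∀ n : ℕ, ∃ z : X, h z + ((((n : ℝ) + 1)⁻¹ * dist x z : ℝ) : EReal) ≤ h x ∧
      ∀ y, h z ≤ h y + ((((n : ℝ) + 1)⁻¹ * dist z y : ℝ) : EReal) :=
    fun n => ekeland_aux h hlsch b hbh x (by rw [hx0]; exact hx) _ (by positivity)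
  choose z hz1 hz2 using hek
  have hzh : ∀ n, h (z n) ≤ f x := by
    intro n
    rw [← hx0]
    refine le_trans ?_ (hz1 n)
    exact le_add_of_nonneg_right (by exact_mod_cast by positivity)
  have hdesc : ∀ n, f (z n) + ((α * dist x (z n) ^ 2 : ℝ) : EReal) ≤ f x := fun n => hzh n
  have hztop : ∀ n, f (z n) ≠ ⊤ := by
    intro n htop
    exact hx (top_le_iff.1 (((htop ▸ hfleh (z n)) : (⊤:EReal) ≤ h (z n)).trans (hzh n)))
  -- slope bound at z n
  have hslope : ∀ n, mSlope f (z n) ≤ ((2 * α * dist x (z n) + ((n : ℝ) + 1)⁻¹ : ℝ) : EReal) := by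
    intro n
    obtain ⟨s, hs⟩ : ∃ s : ℝ, f (z n) = (s : EReal) :=
      ⟨(f (z n)).toReal, (EReal.coe_toReal (hztop n) (hnb (z n))).symm⟩
    refine mSlope_le f (z n) _ (hztop n) (fun r hr => ?_) (by positivity)
    filter_upwards [Metric.ball_mem_nhds (z n) (show (0:ℝ) < r / α by positivity)] with y hy
    rcases eq_or_ne (f y) ⊤ with hfy | hfy
    · rw [hfy, EReal.top_add_coe]; exact le_top
    · obtain ⟨t, ht⟩ : ∃ t : ℝ, f y = (t : EReal) :=
        ⟨(f y).toReal, (EReal.coe_toReal hfy (hnb y)).symm⟩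
      have h1 := hz2 n y
      rw [hh] at h1
      simp only at h1
      rw [hs, ht, ← EReal.coe_add, ← EReal.coe_add, ← EReal.coe_add] at h1
      have h2 : s + α * dist x (z n) ^ 2 ≤
          t + α * dist x y ^ 2 + ((n : ℝ) + 1)⁻¹ * dist (z n) y := by exact_mod_cast h1
      rw [hs, ht, ← EReal.coe_add]
      have h3 : dist x y ≤ dist x (z n) + dist (z n) y := dist_triangle x (z n) y
      have h4 : (0:ℝ) ≤ dist (z n) y := dist_nonneg
      have h5 : α * dist (z n) y ≤ r := by
        rw [Metric.mem_ball, dist_comm] at hy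
        calc α * dist (z n) y ≤ α * (r / α) := by nlinarith
          _ = r := by field_simp
      refine EReal.coe_le_coe_iff.2 ?_
      nlinarith [mul_le_mul h3 h3 dist_nonneg (by positivity : (0:ℝ) ≤ dist x (z n) + dist (z n) y),
        mul_nonneg h4 (sub_nonneg.2 h5), dist_nonneg (x := x) (y := z n)]
  by_cases hcase : ∃ n, (β : EReal) * mSlope f (z n) ≤ ((dist x (z n) : ℝ) : EReal)
  · obtain ⟨n, hn⟩ := hcase
    exact ⟨z n, hdesc n, hn⟩
  push_neg at hcase
  -- distances go to zero
  have hdn : ∀ n, dist x (z n) < β / (1 - 2 * α * β) * ((n : ℝ) + 1)⁻¹ := by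
    intro n
    have h1 := (hcase n).trans_le
      ((mul_le_mul_of_nonneg_left (hslope n) (by exact_mod_cast hβ.le)).trans_eq
        (by rw [← EReal.coe_mul]))
    have h2 : dist x (z n) < β * (2 * α * dist x (z n) + ((n : ℝ) + 1)⁻¹) :=
      EReal.coe_lt_coe_iff.1 h1
    have h3 : 0 < 1 - 2 * α * β := by linarith
    rw [div_mul_eq_mul_div, lt_div_iff₀ h3]
    nlinarith [h2]
  have htend : Tendsto z atTop (nhds x) := by
    rw [tendsto_iff_dist_tendsto_zero]
    refine squeeze_zero (fun n => dist_nonneg)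
      (fun n => le_of_lt (by rw [dist_comm]; exact hdn n)) ?_
    have h0 : Tendsto (fun n : ℕ => ((n : ℝ) + 1)⁻¹) atTop (nhds 0) := by
      simpa [one_div] using tendsto_one_div_add_atTop_nhds_zero_nat (𝕜 := ℝ)
    simpa using h0.const_mul (β / (1 - 2 * α * β))
  have hmin : ∀ y, f x ≤ f y + ((α * dist x y ^ 2 : ℝ) : EReal) := by
    intro y
    rcases eq_or_ne (f y) ⊤ with hfy | hfy
    · rw [hfy, EReal.top_add_coe]; exact le_top
    obtain ⟨t, ht⟩ : ∃ t : ℝ, f y = (t : EReal) :=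
      ⟨(f y).toReal, (EReal.coe_toReal hfy (hnb y)).symm⟩
    rw [ht, ← EReal.coe_add]
    by_contra hcon
    push_neg at hcon
    obtain ⟨c, hc1, hc2⟩ := EReal.lt_iff_exists_real_btwn.1 hcon
    have hc1' : t + α * dist x y ^ 2 < c := EReal.coe_lt_coe_iff.1 hc1
    have ev1 : ∀ᶠ n in atTop, ((c : ℝ) : EReal) < f (z n) := htend.eventually (hlsc x _ hc2)
    have hKpos : 0 < β / (1 - 2 * α * β) + dist x y := by
      have h1' : 0 < β / (1 - 2 * α * β) := div_pos hβ (by linarith)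
      linarith [dist_nonneg (x := x) (y := y)]
    set K : ℝ := β / (1 - 2 * α * β) + dist x y with hK
    have hdK : ∀ n, dist (z n) y ≤ K := by
      intro n
      have h1 : dist (z n) y ≤ dist (z n) x + dist x y := dist_triangle _ _ _
      have h2 : dist (z n) x < β / (1 - 2 * α * β) * ((n : ℝ) + 1)⁻¹ := by
        rw [dist_comm]; exact hdn n
      have h3 : ((n : ℝ) + 1)⁻¹ ≤ 1 := by
        rw [inv_le_one_iff₀]; right; simp
      have h4 : 0 < β / (1 - 2 * α * β) := div_pos hβ (by linarith)
      rw [hK]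
      nlinarith
    have hfin : c ≤ t + α * dist x y ^ 2 := by
      refine le_of_forall_pos_le_add fun ε hε => ?_
      have h0 : Tendsto (fun n : ℕ => ((n : ℝ) + 1)⁻¹ * K) atTop (nhds 0) := by
        have h0' : Tendsto (fun n : ℕ => ((n : ℝ) + 1)⁻¹) atTop (nhds 0) := by
          simpa [one_div] using tendsto_one_div_add_atTop_nhds_zero_nat (𝕜 := ℝ)
        simpa using h0'.mul_const K
      have ev2 : ∀ᶠ n : ℕ in atTop, ((n : ℝ) + 1)⁻¹ * K < ε := h0.eventually_lt_const hε
      obtain ⟨n, h1n, h2n⟩ := (ev1.and ev2).exists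
      obtain ⟨s, hs⟩ : ∃ s : ℝ, f (z n) = (s : EReal) :=
        ⟨(f (z n)).toReal, (EReal.coe_toReal (hztop n) (hnb (z n))).symm⟩
      rw [hs] at h1n
      have hcs : c < s := EReal.coe_lt_coe_iff.1 h1n
      have h5 := hz2 n y
      rw [hh] at h5
      simp only at h5
      rw [hs, ht, ← EReal.coe_add, ← EReal.coe_add, ← EReal.coe_add] at h5
      have h6 : s + α * dist x (z n) ^ 2 ≤
          t + α * dist x y ^ 2 + ((n : ℝ) + 1)⁻¹ * dist (z n) y := by exact_mod_cast h5
      have h7 : ((n : ℝ) + 1)⁻¹ * dist (z n) y ≤ ((n : ℝ) + 1)⁻¹ * K :=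
        mul_le_mul_of_nonneg_left (hdK n) (by positivity)
      nlinarith [sq_nonneg (dist x (z n)), mul_nonneg hα.le (sq_nonneg (dist x (z n)))]
    linarith
  refine ⟨x, by simp, ?_⟩
  have hs0 : mSlope f x ≤ ((0 : ℝ) : EReal) := by
    refine mSlope_le f x 0 hx (fun r hr => ?_) le_rfl
    filter_upwards [Metric.ball_mem_nhds x (show (0:ℝ) < r / α by positivity)] with y hy
    refine (hmin y).trans (add_le_add_right ?_ _)
    rw [Metric.mem_ball, dist_comm] at hy
    refine EReal.coe_le_coe_iff.2 ?_
    have h4 : (0:ℝ) ≤ dist x y := dist_nonneg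
    have h5 : α * dist x y ≤ r := by
      calc α * dist x y ≤ α * (r / α) := by nlinarith
        _ = r := by field_simp
    nlinarith
  have hs1 : mSlope f x = 0 := le_antisymm (by exact_mod_cast hs0) (mSlope_nonneg f x)
  rw [hs1, mul_zero]
  simp
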